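/- Let G be a finite simple graph and let v be a non-free vertex of G, i.e., the neighborhood N_G(v) does not induce a complete subgraph. Let G_v denote the graph on V(G) with edge set E(G) ∪ {{u,w} : u, w ∈ N_G(v), u ≠ w}. Then η(G_v) < η(G). -/

import Mathlib

open SimpleGraph

variable {V : Type*}

/-- `H` is a clique disjoint edge set of `G`: a set of edges of `G` such that
no two distinct edges of `H` are contained in a common clique of `G`. -/
def CliqueDisjoint (G : SimpleGraph V) (H : Set (Sym2 V)) : Prop :=
  H ⊆ G.edgeSet ∧ ∀ e ∈ H, ∀ f ∈ H, e ≠ f →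
    ¬ ∃ K : Set V, G.IsClique K ∧ (∀ v ∈ e, v ∈ K) ∧ (∀ v ∈ f, v ∈ K)

/-- `eta G` is the maximum size of a clique disjoint edge set in `G`. -/
noncomputable def eta (G : SimpleGraph V) : ℕ :=
  sSup {n | ∃ H : Finset (Sym2 V), CliqueDisjoint G ↑H ∧ H.card = n}

/-- `Gv G v` is the graph obtained from `G` by adding all edges between neighbors of `v`. -/
def Gv (G : SimpleGraph V) (v : V) : SimpleGraph V :=
  G ⊔ SimpleGraph.fromRel (fun u w => G.Adj v u ∧ G.Adj v w)

lemma clique_subset_of_mem {G : SimpleGraph V} {K : Set V} (hK : G.IsClique K) {v : V}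
    (hvK : v ∈ K) : K ⊆ insert v (G.neighborSet v) := by
  intro x hx
  by_cases hxv : x = v
  · exact hxv ▸ Set.mem_insert _ _
  · exact Set.mem_insert_of_mem _ (hK hvK hx (fun h => hxv h.symm))

lemma eta_bddAbove [Fintype V] (G : SimpleGraph V) :
    BddAbove {n | ∃ H : Finset (Sym2 V), CliqueDisjoint G ↑H ∧ H.card = n} := by
  classical
  refine ⟨Fintype.card (Sym2 V), ?_⟩
  rintro n ⟨H, -, rfl⟩
  exact Finset.card_le_univ H

lemma eta_nonempty (G : SimpleGraph V) :
    Set.Nonempty {n | ∃ H : Finset (Sym2 V), CliqueDisjoint G ↑H ∧ H.card = n} := by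
  refine ⟨0, ∅, ⟨?_, ?_⟩, Finset.card_empty⟩
  · simp [Set.subset_def]
  · simp

/-- If `v` is a non-free vertex of `G` then `η(G_v) < η(G)`. -/
theorem eta_Gv_lt [Fintype V] (G : SimpleGraph V) (v : V)
    (hv : ¬ G.IsClique (G.neighborSet v)) :
    eta (Gv G v) < eta G := by
  classical
  rw [SimpleGraph.isClique_iff, Set.Pairwise] at hv
  push_neg at hv
  obtain ⟨u, hu, w, hw, huw, hnadj⟩ := hv
  rw [SimpleGraph.mem_neighborSet] at hu hw
  -- the maximum clique-disjoint set of Gv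
  obtain ⟨S, hS, hScard⟩ :
      ∃ H : Finset (Sym2 V), CliqueDisjoint (Gv G v) ↑H ∧ H.card = eta (Gv G v) :=
    Nat.sSup_mem (eta_nonempty (Gv G v)) (eta_bddAbove (Gv G v))
  set Kv : Set V := insert v (G.neighborSet v) with hKv
  have hKvClique : (Gv G v).IsClique Kv := by
    intro x hx y hy hxy
    rw [hKv, Set.mem_insert_iff] at hx hy
    rcases hx with hx | hx <;> rcases hy with hy | hy
    · exact absurd (hx.trans hy.symm) hxy
    · rw [hx]; exact Or.inl hy
    · rw [hy]; exact ((show (Gv G v).Adj v x from Or.inl hx).symm)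
    · exact Or.inr ⟨hxy, Or.inl ⟨hx, hy⟩⟩
  have hle : G ≤ Gv G v := le_sup_left
  set S' : Finset (Sym2 V) := S.filter (fun e => ¬ ∀ x ∈ e, x ∈ Kv) with hS'
  -- at most one edge of S lies inside Kv
  have hcardB : (S.filter (fun e => ∀ x ∈ e, x ∈ Kv)).card ≤ 1 := by
    rw [Finset.card_le_one]
    intro e he f hf
    simp only [Finset.mem_filter] at he hf
    by_contra hef
    exact hS.2 e he.1 f hf.1 hef ⟨Kv, hKvClique, he.2, hf.2⟩
  have hScard' : S.card ≤ S'.card + 1 := by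
    have h2 : S' = S \ S.filter (fun e => ∀ x ∈ e, x ∈ Kv) := by
      rw [hS', Finset.filter_not]
    have h3 : S'.card = S.card - (S.filter (fun e => ∀ x ∈ e, x ∈ Kv)).card := by
      rw [h2, Finset.card_sdiff_of_subset (Finset.filter_subset _ _)]
    have h4 : (S.filter (fun e => ∀ x ∈ e, x ∈ Kv)).card ≤ S.card :=
      Finset.card_filter_le _ _
    omega
  -- edges of S' are edges of G
  have hS'G : ∀ e ∈ S', e ∈ G.edgeSet := by
    intro e he
    rw [hS', Finset.mem_filter] at he
    obtain ⟨heS, heK⟩ := he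
    have heGv : e ∈ (Gv G v).edgeSet := hS.1 heS
    induction e using Sym2.ind with
    | _ a b =>
      rw [SimpleGraph.mem_edgeSet] at heGv ⊢
      rcases heGv with h | ⟨hab, h⟩
      · exact h
      · exfalso
        apply heK
        intro x hx
        rw [Sym2.mem_iff] at hx
        have ha : G.Adj v a := by rcases h with ⟨h1, _⟩ | ⟨_, h1⟩ <;> exact h1
        have hb : G.Adj v b := by rcases h with ⟨_, h2⟩ | ⟨h2, _⟩ <;> exact h2
        rcases hx with rfl | rfl
        · exact Set.mem_insert_of_mem _ ha
        · exact Set.mem_insert_of_mem _ hb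
  -- the new set
  set T : Finset (Sym2 V) := insert s(v,u) (insert s(v,w) S') with hT
  have hvu : s(v,u) ∉ S' := by
    rw [hS', Finset.mem_filter]
    rintro ⟨-, h⟩
    apply h
    intro x hx
    rw [Sym2.mem_iff] at hx
    rcases hx with rfl | rfl
    · exact Set.mem_insert _ _
    · exact Set.mem_insert_of_mem _ hu
  have hvw : s(v,w) ∉ S' := by
    rw [hS', Finset.mem_filter]
    rintro ⟨-, h⟩
    apply h
    intro x hx
    rw [Sym2.mem_iff] at hx
    rcases hx with rfl | rfl
    · exact Set.mem_insert _ _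
    · exact Set.mem_insert_of_mem _ hw
  have hne : s(v,u) ≠ s(v,w) := by
    intro h
    rw [Sym2.eq_iff] at h
    rcases h with ⟨-, rfl⟩ | ⟨rfl, -⟩
    · exact huw rfl
    · exact G.irrefl hw
  have hTcard : T.card = S'.card + 2 := by
    rw [hT, Finset.card_insert_of_notMem, Finset.card_insert_of_notMem hvw]
    rw [Finset.mem_insert]
    push_neg
    exact ⟨hne, hvu⟩
  -- membership characterization
  have hmemT : ∀ e ∈ T, e = s(v,u) ∨ e = s(v,w) ∨ e ∈ S' := by
    intro e he
    rw [hT, Finset.mem_insert, Finset.mem_insert] at he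
    tauto
  -- no G-clique contains v and an edge of S'
  have hkey : ∀ f ∈ S', ∀ K : Set V, G.IsClique K → v ∈ K → ¬ (∀ x ∈ f, x ∈ K) := by
    intro f hf K hK hvK hfK
    rw [hS', Finset.mem_filter] at hf
    exact hf.2 (fun x hx => clique_subset_of_mem hK hvK (hfK x hx))
  have hTCD : CliqueDisjoint G ↑T := by
    constructor
    · intro e he
      rw [Finset.mem_coe] at he
      rcases hmemT e he with rfl | rfl | h
      · exact hu
      · exact hw
      · exact hS'G e h
    · intro e he f hf hef ⟨K, hK, heK, hfK⟩
      rw [Finset.mem_coe] at he hf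
      have hcase : ∀ g ∈ S', ∀ a, g ≠ s(v,a) → ¬ (∀ x ∈ g, x ∈ K) ∨ ¬ (∀ x ∈ s(v,a), x ∈ K) := by
        intro g hg a _ 
        by_cases hgK : ∀ x ∈ g, x ∈ K
        · right
          intro hvaK
          exact hkey g hg K hK (hvaK v (Sym2.mem_mk_left v a)) hgK
        · exact Or.inl hgK
      rcases hmemT e he with rfl | rfl | heS' <;> rcases hmemT f hf with rfl | rfl | hfS'
      · exact hef rfl
      · -- vu and vw in common clique K
        have hune : u ≠ w := huw
        exact hnadj (hK (heK u (Sym2.mem_mk_right v u)) (hfK w (Sym2.mem_mk_right v w)) hune)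
      · exact hkey f hfS' K hK (heK v (Sym2.mem_mk_left v u)) hfK
      · exact hnadj (G.adj_symm (hK (heK w (Sym2.mem_mk_right v w)) (hfK u (Sym2.mem_mk_right v u)) (Ne.symm huw)))
      · exact hef rfl
      · exact hkey f hfS' K hK (heK v (Sym2.mem_mk_left v w)) hfK
      · exact hkey e heS' K hK (hfK v (Sym2.mem_mk_left v u)) heK
      · exact hkey e heS' K hK (hfK v (Sym2.mem_mk_left v w)) heK
      · -- both in S'
        have heS : e ∈ S := (Finset.mem_filter.mp (hS' ▸ heS')).1
        have hfS : f ∈ S := (Finset.mem_filter.mp (hS' ▸ hfS')).1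
        exact hS.2 e heS f hfS hef ⟨K, hK.mono hle, heK, hfK⟩
  -- conclude
  have hTle : T.card ≤ eta G := le_csSup (eta_bddAbove G) ⟨T, hTCD, rfl⟩
  omega
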